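/- For nonnegative integer n, positive integer a, and real x, the generalized Bernoulli polynomial satisfies B_n^a(-x) = \sum_{r=0}^{n} C(n+1, r+1) (-1)^r \sum_{l=0}^{n} S(l+ar, ar) (rx)^{n-l} C(n,l) C(l+ar, ar)^{-1}. -/

import Mathlib

open Finset PowerSeries

/-- Stirling numbers of the second kind. -/
def stirling2 : ℕ → ℕ → ℕ
  | 0, 0 => 1
  | 0, _ + 1 => 0
  | _ + 1, 0 => 0
  | n + 1, k + 1 => (k + 1) * stirling2 n (k + 1) + stirling2 n k

/-- Partial Bell polynomial `B_{n,k}(x 1, x 2, ...)`, summing over sequences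
`ℓ` of nonnegative integers with `∑ i * ℓ i = n` and `∑ ℓ i = k`. -/
noncomputable def bellPoly (n k : ℕ) (x : ℕ → ℝ) : ℝ :=
  ∑ ℓ ∈ (Fintype.piFinset fun _ : Fin n => Finset.range (n + 1)).filter
      (fun ℓ => (∑ i, (i.1 + 1) * ℓ i) = n ∧ (∑ i, ℓ i) = k),
    ((n.factorial : ℝ) / ∏ i, ((ℓ i).factorial : ℝ)) *
      ∏ i, (x (i.1 + 1) / ((i.1 + 1).factorial : ℝ)) ^ (ℓ i)

/-- The power series `(e^t - 1)/t`, with constant term `1`. -/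
noncomputable def expm1DivT : PowerSeries ℝ :=
  PowerSeries.mk fun n => 1 / ((n + 1).factorial : ℝ)

/-- The power series `e^{x t}`. -/
noncomputable def expSeries (x : ℝ) : PowerSeries ℝ :=
  PowerSeries.mk fun n => x ^ n / (n.factorial : ℝ)

/-- The generalized Bernoulli polynomial value `B_n^a(-x)`, defined via the
exponential generating function `(t/(e^t-1))^a e^{-x t}`. -/
noncomputable def genBernoulliNeg (a : ℕ) (x : ℝ) (n : ℕ) : ℝ :=
  (n.factorial : ℝ) * PowerSeries.coeff (R := ℝ) n ((expm1DivT ^ a)⁻¹ * expSeries (-x))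

lemma stirling2_succ_succ (n k : ℕ) :
    stirling2 (n + 1) (k + 1) = (k + 1) * stirling2 n (k + 1) + stirling2 n k := rfl

lemma stirling2_eq_zero_of_lt : ∀ {n k}, n < k → stirling2 n k = 0
  | 0, _ + 1, _ => rfl
  | n + 1, k + 1, h => by
    rw [stirling2, stirling2_eq_zero_of_lt (by omega : n < k + 1),
      stirling2_eq_zero_of_lt (by omega : n < k)]
    ring

lemma stirling2_self : ∀ n, stirling2 n n = 1
  | 0 => rfl
  | n + 1 => by
    rw [stirling2, stirling2_self n, stirling2_eq_zero_of_lt n.lt_succ_self]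
    ring

lemma stirling2_succ_one : ∀ n, stirling2 (n + 1) 1 = 1
  | 0 => rfl
  | n + 1 => by
    show 1 * stirling2 (n + 1) 1 + stirling2 (n + 1) 0 = 1
    rw [stirling2_succ_one n]
    rfl

lemma stirling2_zero_left : ∀ n, stirling2 n 0 = if n = 0 then 1 else 0
  | 0 => rfl
  | _ + 1 => rfl

/-- Key convolution identity for Stirling numbers. -/
lemma stirling2_conv : ∀ l m : ℕ,
    stirling2 (l + m + 1) (m + 1) * (m + 1).factorial =
      ∑ i ∈ range (l + 1),
        stirling2 (i + m) m * m.factorial * (l + m + 1).choose (i + m) := by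
  intro l
  induction l with
  | zero =>
    intro m
    simp [stirling2_self, Nat.factorial_succ, Nat.choose_succ_self_right, Nat.mul_comm]
  | succ l ihl =>
    intro m
    induction m with
    | zero =>
      rw [stirling2_succ_one]
      rw [Finset.sum_eq_single 0]
      · simp [stirling2_zero_left]
      · intro b _ hb
        simp [stirling2_zero_left, hb]
      · simp
    | succ m ihm =>
      have e1 : ∀ i ∈ range (l + 2),
          stirling2 (i + (m + 1)) (m + 1) * (m + 1).factorial *
              (l + 1 + (m + 1) + 1).choose (i + (m + 1)) =
            stirling2 (i + m + 1) (m + 1) * (m + 1).factorial * (l + m + 2).choose (i + m)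
              + stirling2 (i + m + 1) (m + 1) * (m + 1).factorial *
                  (l + m + 2).choose (i + m + 1) := by
        intro i _
        rw [show l + 1 + (m + 1) + 1 = (l + m + 2) + 1 from by omega,
          show i + (m + 1) = (i + m) + 1 from rfl, Nat.choose_succ_succ, Nat.mul_add]
      rw [show l + 1 + 1 = l + 2 from rfl, Finset.sum_congr rfl e1, Finset.sum_add_distrib]
      have hB : ∑ i ∈ range (l + 2),
          stirling2 (i + m + 1) (m + 1) * (m + 1).factorial * (l + m + 2).choose (i + m + 1)
          = stirling2 (l + m + 2) (m + 2) * (m + 2).factorial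
            + stirling2 (l + m + 2) (m + 1) * (m + 1).factorial := by
        rw [Finset.sum_range_succ]
        have h : ∑ i ∈ range (l + 1), stirling2 (i + m + 1) (m + 1) * (m + 1).factorial *
            (l + m + 2).choose (i + m + 1) = stirling2 (l + m + 2) (m + 2) * (m + 2).factorial := by
          have h0 := (ihl (m + 1)).symm
          rw [show l + (m + 1) + 1 = l + m + 2 from by omega] at h0
          exact h0
        rw [show l + 1 + m + 1 = l + m + 2 from by omega, Nat.choose_self, Nat.mul_one, h]
      have hA : ∑ i ∈ range (l + 2),
          stirling2 (i + m + 1) (m + 1) * (m + 1).factorial * (l + m + 2).choose (i + m)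
          = (m + 1) * (stirling2 (l + m + 2) (m + 2) * (m + 2).factorial)
            + (m + 1) * (stirling2 (l + 1 + m + 1) (m + 1) * (m + 1).factorial) := by
        have e2 : ∀ i ∈ range (l + 2),
            stirling2 (i + m + 1) (m + 1) * (m + 1).factorial * (l + m + 2).choose (i + m)
            = (m + 1) * (stirling2 (i + m) (m + 1) * (m + 1).factorial *
                  (l + m + 2).choose (i + m))
              + (m + 1) * (stirling2 (i + m) m * m.factorial * (l + 1 + m + 1).choose (i + m)) := by
          intro i _
          rw [stirling2_succ_succ,
            show l + 1 + m + 1 = l + m + 2 from by omega,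
            show (m + 1).factorial = (m + 1) * m.factorial from rfl]
          ring
        rw [Finset.sum_congr rfl e2, Finset.sum_add_distrib, ← Finset.mul_sum, ← Finset.mul_sum,
          ← ihm]
        congr 1
        -- ∑ i in range (l+2), (m+1) * (stirling2 (i+m) (m+1) * (m+1)! * C (l+m+2) (i+m))
        --   = (m+1) * (stirling2 (l+m+2) (m+2) * (m+2)!)
        congr 1
        rw [Finset.sum_range_succ' _ (l + 1)]
        have e3 : ∀ k ∈ range (l + 1),
            stirling2 (k + 1 + m) (m + 1) * (m + 1).factorial * (l + m + 2).choose (k + 1 + m)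
            = stirling2 (k + m + 1) (m + 1) * (m + 1).factorial *
                (l + m + 2).choose (k + m + 1) := by
          intro k _
          rw [show k + 1 + m = k + m + 1 from by omega]
        rw [Finset.sum_congr rfl e3, show (0:ℕ) + m = m from by omega,
          stirling2_eq_zero_of_lt (Nat.lt_succ_self m)]
        have h : ∑ i ∈ range (l + 1), stirling2 (i + m + 1) (m + 1) * (m + 1).factorial *
            (l + m + 2).choose (i + m + 1) = stirling2 (l + m + 2) (m + 2) * (m + 2).factorial := by
          have h0 := (ihl (m + 1)).symm
          rw [show l + (m + 1) + 1 = l + m + 2 from by omega] at h0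
          exact h0
        simpa using h
      rw [hA, hB, show l + 1 + (m + 1) + 1 = (l + m + 2) + 1 from by omega,
        stirling2_succ_succ, show l + 1 + m + 1 = l + m + 2 from by omega,
        show (m + 1 + 1).factorial = (m + 2) * (m + 1).factorial from rfl]
      ring_nf


lemma coeff_expm1DivT_pow : ∀ (m l : ℕ),
    coeff (R := ℝ) l (expm1DivT ^ m) =
      (stirling2 (l + m) m : ℝ) * (m.factorial : ℝ) / ((l + m).factorial : ℝ)
  | 0, l => by
    rw [pow_zero, coeff_one]
    cases l with
    | zero => norm_num [stirling2]
    | succ l => simp [stirling2]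
  | m + 1, l => by
    rw [pow_succ, coeff_mul, Nat.sum_antidiagonal_eq_sum_range_succ_mk]
    have hfac : ((l + (m + 1)).factorial : ℝ) ≠ 0 := by
      exact_mod_cast Nat.factorial_ne_zero _
    rw [eq_div_iff hfac, Finset.sum_mul]
    have key : ((stirling2 (l + m + 1) (m + 1) * (m + 1).factorial : ℕ) : ℝ)
        = ∑ i ∈ range (l + 1),
            ((stirling2 (i + m) m * m.factorial * (l + m + 1).choose (i + m) : ℕ) : ℝ) := by
      exact_mod_cast congrArg (Nat.cast : ℕ → ℝ) (stirling2_conv l m)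
    push_cast at key
    rw [show l + (m + 1) = l + m + 1 from by omega]
    rw [show (stirling2 (l + m + 1) (m + 1) : ℝ) * ((m + 1).factorial : ℝ)
        = ((stirling2 (l + m + 1) (m + 1) : ℝ) * ((m + 1).factorial : ℝ)) from rfl]
    rw [key]
    refine Finset.sum_congr rfl fun i hi => ?_
    have hil : i ≤ l := Nat.lt_succ_iff.mp (Finset.mem_range.mp hi)
    have hle : i + m ≤ l + m + 1 := by omega
    have hC : (((l + m + 1).choose (i + m) : ℕ) : ℝ) * ((i + m).factorial : ℝ) *
        (((l - i) + 1).factorial : ℝ) = ((l + m + 1).factorial : ℝ) := by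
      have h := Nat.choose_mul_factorial_mul_factorial hle
      rw [show l + m + 1 - (i + m) = (l - i) + 1 from by omega] at h
      exact_mod_cast congrArg (Nat.cast : ℕ → ℝ) h
    rw [coeff_expm1DivT_pow m i, expm1DivT, coeff_mk]
    have h1 : ((i + m).factorial : ℝ) ≠ 0 := by exact_mod_cast Nat.factorial_ne_zero _
    have h2 : ((l - i + 1).factorial : ℝ) ≠ 0 := by exact_mod_cast Nat.factorial_ne_zero _
    rw [← hC]
    field_simp

lemma alt_sum_real (m : ℕ) :
    ∑ j ∈ range (m + 1), (-1 : ℝ) ^ j * (m.choose j : ℝ) = if m = 0 then 1 else 0 := by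
  have h := congrArg (fun z : ℤ => (z : ℝ)) (Int.alternating_sum_range_choose (n := m))
  push_cast at h
  simpa [apply_ite (fun z : ℤ => (z : ℝ))] using h

lemma choose_alt_sum {k n : ℕ} (hkn : k ≤ n) :
    ∑ r ∈ range (n + 1), (-1 : ℝ) ^ r * ((n + 1).choose (r + 1) : ℝ) * (r.choose k : ℝ)
      = (-1 : ℝ) ^ k := by
  induction n, hkn using Nat.le_induction with
  | base =>
    rw [Finset.sum_eq_single k]
    · simp
    · intro b hb hbk
      have : b < k ∨ b = k := by
        have := Finset.mem_range.mp hb; omega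
      rcases this with h | h
      · simp [Nat.choose_eq_zero_of_lt h]
      · exact absurd h hbk
    · intro h
      exact absurd (Finset.mem_range.mpr (Nat.lt_succ_self k)) h
  | succ n hkn ih =>
    have e1 : ∀ r ∈ range (n + 2),
        (-1 : ℝ) ^ r * ((n + 2).choose (r + 1) : ℝ) * (r.choose k : ℝ)
        = (-1 : ℝ) ^ r * ((n + 1).choose r : ℝ) * (r.choose k : ℝ)
          + (-1 : ℝ) ^ r * ((n + 1).choose (r + 1) : ℝ) * (r.choose k : ℝ) := by
      intro r _
      rw [show (n + 2).choose (r + 1) = (n + 1).choose r + (n + 1).choose (r + 1) from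
        Nat.choose_succ_succ (n + 1) r]
      push_cast
      ring
    rw [show n + 1 + 1 = n + 2 from rfl, Finset.sum_congr rfl e1, Finset.sum_add_distrib]
    have hU : ∑ r ∈ range (n + 2),
        (-1 : ℝ) ^ r * ((n + 1).choose (r + 1) : ℝ) * (r.choose k : ℝ) = (-1 : ℝ) ^ k := by
      rw [Finset.sum_range_succ, Nat.choose_eq_zero_of_lt (by omega : n + 1 < n + 2)]
      simpa using ih
    have hT : ∑ r ∈ range (n + 2),
        (-1 : ℝ) ^ r * ((n + 1).choose r : ℝ) * (r.choose k : ℝ) = 0 := by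
      have hsub : Finset.Ico k (n + 2) ⊆ range (n + 2) := by
        intro r hr
        exact Finset.mem_range.mpr (Finset.mem_Ico.mp hr).2
      rw [← Finset.sum_subset hsub (by
        intro r hr hrn
        have : r < k := by
          have h1 := Finset.mem_range.mp hr
          by_contra h
          exact hrn (Finset.mem_Ico.mpr ⟨by omega, h1⟩)
        simp [Nat.choose_eq_zero_of_lt this])]
      rw [Finset.sum_Ico_eq_sum_range]
      have e2 : ∀ j ∈ range (n + 2 - k),
          (-1 : ℝ) ^ (k + j) * ((n + 1).choose (k + j) : ℝ) * ((k + j).choose k : ℝ)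
          = (-1 : ℝ) ^ k * ((n + 1).choose k : ℝ) *
              ((-1 : ℝ) ^ j * (((n + 1 - k).choose j : ℕ) : ℝ)) := by
        intro j hj
        have hj' : j < n + 2 - k := Finset.mem_range.mp hj
        have hc := Nat.choose_mul (n := n + 1) (show k ≤ k + j by omega)
        rw [show k + j - k = j from by omega] at hc
        have hc' : (((n + 1).choose (k + j) : ℕ) : ℝ) * (((k + j).choose k : ℕ) : ℝ)
            = (((n + 1).choose k : ℕ) : ℝ) * (((n + 1 - k).choose j : ℕ) : ℝ) := by
          exact_mod_cast congrArg (Nat.cast : ℕ → ℝ) hc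
        rw [pow_add]
        calc (-1 : ℝ) ^ k * (-1 : ℝ) ^ j * ((n + 1).choose (k + j) : ℝ) * ((k + j).choose k : ℝ)
            = (-1 : ℝ) ^ k * (-1 : ℝ) ^ j *
              ((((n + 1).choose (k + j) : ℕ) : ℝ) * (((k + j).choose k : ℕ) : ℝ)) := by ring
          _ = _ := by rw [hc']; ring
      rw [Finset.sum_congr rfl e2, ← Finset.mul_sum,
        show n + 2 - k = (n + 1 - k) + 1 from by omega, alt_sum_real,
        if_neg (by omega : ¬ n + 1 - k = 0), mul_zero]
    rw [hT, hU, zero_add]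

lemma coeff_pow_eq_zero' {H : PowerSeries ℝ} (hH : constantCoeff (R := ℝ) H = 0) {k j : ℕ}
    (hjk : j < k) : coeff (R := ℝ) j (H ^ k) = 0 := by
  have hdvd : (X : PowerSeries ℝ) ^ k ∣ H ^ k :=
    pow_dvd_pow_of_dvd (PowerSeries.X_dvd_iff.mpr hH) k
  exact (PowerSeries.X_pow_dvd_iff.mp hdvd) j hjk

lemma coeff_inv_sum (F : PowerSeries ℝ) (hF : constantCoeff (R := ℝ) F = 1) (n : ℕ) :
    coeff (R := ℝ) n F⁻¹ =
      ∑ r ∈ range (n + 1), ((n + 1).choose (r + 1) : ℝ) * (-1 : ℝ) ^ r * coeff (R := ℝ) n (F ^ r) := by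
  have hF0 : constantCoeff (R := ℝ) F ≠ 0 := by rw [hF]; exact one_ne_zero
  set H : PowerSeries ℝ := 1 - F with hHdef
  have hH : constantCoeff (R := ℝ) H = 0 := by simp [hHdef, hF]
  have hFH : F = 1 - H := by rw [hHdef]; ring
  set S : PowerSeries ℝ := ∑ k ∈ range (n + 1), H ^ k with hSdef
  have claim1 : coeff (R := ℝ) n F⁻¹ = ∑ k ∈ range (n + 1), coeff (R := ℝ) n (H ^ k) := by
    have hgeo : F * S = 1 - H ^ (n + 1) := by
      rw [hFH, hSdef]
      linear_combination -(geom_sum_mul H (n + 1))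
    have hone : (1 : PowerSeries ℝ) = F * S + H ^ (n + 1) := by rw [hgeo]; ring
    have hsplit : F⁻¹ = S + F⁻¹ * H ^ (n + 1) := by
      calc F⁻¹ = F⁻¹ * 1 := (mul_one _).symm
        _ = F⁻¹ * (F * S + H ^ (n + 1)) := by rw [← hone]
        _ = S + F⁻¹ * H ^ (n + 1) := by
            rw [mul_add, ← mul_assoc, PowerSeries.inv_mul_cancel F hF0, one_mul]
    rw [hsplit, map_add, map_sum]
    have hz : coeff (R := ℝ) n (F⁻¹ * H ^ (n + 1)) = 0 := by
      rw [coeff_mul]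
      refine Finset.sum_eq_zero fun p hp => ?_
      have hp2 : p.2 ≤ n := by
        have := Finset.HasAntidiagonal.mem_antidiagonal.mp hp; omega
      rw [coeff_pow_eq_zero' hH (by omega : p.2 < n + 1), mul_zero]
    rw [hz, add_zero]
  have claim2 : ∀ r ∈ range (n + 1), coeff (R := ℝ) n (F ^ r)
      = ∑ k ∈ range (n + 1), (r.choose k : ℝ) * (-1 : ℝ) ^ k * coeff (R := ℝ) n (H ^ k) := by
    intro r hr
    have hrn : r ≤ n := Nat.lt_succ_iff.mp (Finset.mem_range.mp hr)
    have hpow : F ^ r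
        = ∑ k ∈ range (r + 1), (-H) ^ k * 1 ^ (r - k) * (r.choose k : PowerSeries ℝ) := by
      rw [hFH, show (1 : PowerSeries ℝ) - H = -H + 1 from by ring, add_pow]
    have hterm : ∀ k : ℕ, coeff (R := ℝ) n ((-H) ^ k * 1 ^ (r - k) * (r.choose k : PowerSeries ℝ))
        = (r.choose k : ℝ) * (-1 : ℝ) ^ k * coeff (R := ℝ) n (H ^ k) := by
      intro k
      have h1 : ((r.choose k : ℕ) : PowerSeries ℝ) = PowerSeries.C (R := ℝ) ((r.choose k : ℕ) : ℝ) :=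
        (map_natCast (PowerSeries.C (R := ℝ)) (r.choose k)).symm
      have h2 : (-H) ^ k = PowerSeries.C (R := ℝ) ((-1 : ℝ) ^ k) * H ^ k := by
        rw [neg_pow, map_pow, map_neg, map_one]
      rw [one_pow, mul_one, h1, h2, mul_comm (PowerSeries.C (R := ℝ) ((-1 : ℝ) ^ k) * H ^ k) _,
        ← mul_assoc, ← map_mul, PowerSeries.coeff_C_mul]
    rw [hpow, map_sum, Finset.sum_congr rfl fun k _ => hterm k,
      Finset.sum_subset (Finset.range_subset_range.mpr (by omega : r + 1 ≤ n + 1))]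
    intro k hk hk'
    have hkr : r < k := by
      have h1 := Finset.mem_range.mp hk
      by_contra h
      exact hk' (Finset.mem_range.mpr (by omega))
    rw [Nat.choose_eq_zero_of_lt hkr]
    push_cast
    ring
  have step : ∀ r ∈ range (n + 1),
      ((n + 1).choose (r + 1) : ℝ) * (-1 : ℝ) ^ r * coeff (R := ℝ) n (F ^ r)
      = ∑ k ∈ range (n + 1), ((n + 1).choose (r + 1) : ℝ) * (-1 : ℝ) ^ r *
          ((r.choose k : ℝ) * (-1 : ℝ) ^ k * coeff (R := ℝ) n (H ^ k)) := by
    intro r hr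
    rw [claim2 r hr, Finset.mul_sum]
  rw [Finset.sum_congr rfl step, Finset.sum_comm]
  have inner : ∀ k ∈ range (n + 1),
      (∑ r ∈ range (n + 1), ((n + 1).choose (r + 1) : ℝ) * (-1 : ℝ) ^ r *
          ((r.choose k : ℝ) * (-1 : ℝ) ^ k * coeff (R := ℝ) n (H ^ k)))
      = coeff (R := ℝ) n (H ^ k) := by
    intro k hk
    have hkn : k ≤ n := Nat.lt_succ_iff.mp (Finset.mem_range.mp hk)
    calc (∑ r ∈ range (n + 1), ((n + 1).choose (r + 1) : ℝ) * (-1 : ℝ) ^ r *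
          ((r.choose k : ℝ) * (-1 : ℝ) ^ k * coeff (R := ℝ) n (H ^ k)))
        = (∑ r ∈ range (n + 1), (-1 : ℝ) ^ r * ((n + 1).choose (r + 1) : ℝ) * (r.choose k : ℝ)) *
            ((-1 : ℝ) ^ k * coeff (R := ℝ) n (H ^ k)) := by
          rw [Finset.sum_mul]
          exact Finset.sum_congr rfl fun r _ => by ring
      _ = (-1 : ℝ) ^ k * ((-1 : ℝ) ^ k * coeff (R := ℝ) n (H ^ k)) := by rw [choose_alt_sum hkn]
      _ = coeff (R := ℝ) n (H ^ k) := by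
          rw [← mul_assoc, ← pow_add, Even.neg_one_pow ⟨k, rfl⟩, one_mul]
  rw [Finset.sum_congr rfl inner, claim1]


lemma expSeries_eq_rescale (x : ℝ) : expSeries x = rescale x (PowerSeries.exp ℝ) := by
  ext n
  simp [expSeries, PowerSeries.coeff_rescale, PowerSeries.coeff_exp, div_eq_mul_inv]

lemma expSeries_mul (x y : ℝ) : expSeries x * expSeries y = expSeries (x + y) := by
  rw [expSeries_eq_rescale, expSeries_eq_rescale, expSeries_eq_rescale,
    PowerSeries.exp_mul_exp_eq_exp_add]

lemma expSeries_zero : expSeries 0 = 1 := by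
  ext n
  rw [expSeries, coeff_mk, PowerSeries.coeff_one]
  cases n with
  | zero => norm_num
  | succ n => norm_num

lemma expSeries_pow (x : ℝ) : ∀ r : ℕ, expSeries x ^ r = expSeries (r * x)
  | 0 => by rw [pow_zero, Nat.cast_zero, zero_mul, expSeries_zero]
  | r + 1 => by
    rw [pow_succ, expSeries_pow x r, expSeries_mul]
    push_cast
    ring_nf

lemma constantCoeff_expm1DivT : constantCoeff (R := ℝ) expm1DivT = 1 := by
  rw [← PowerSeries.coeff_zero_eq_constantCoeff_apply, expm1DivT, coeff_mk]
  norm_num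

lemma constantCoeff_expSeries (x : ℝ) : constantCoeff (R := ℝ) (expSeries x) = 1 := by
  rw [← PowerSeries.coeff_zero_eq_constantCoeff_apply, expSeries, coeff_mk]
  norm_num

lemma inv_rewrite (a : ℕ) (x : ℝ) :
    (expm1DivT ^ a)⁻¹ * expSeries (-x) = (expm1DivT ^ a * expSeries x)⁻¹ := by
  have hx : constantCoeff (R := ℝ) (expSeries x) ≠ 0 := by
    rw [constantCoeff_expSeries]; exact one_ne_zero
  have hinv : expSeries (-x) = (expSeries x)⁻¹ := by
    apply (PowerSeries.eq_inv_iff_mul_eq_one hx).mpr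
    rw [expSeries_mul, neg_add_cancel, expSeries_zero]
  rw [PowerSeries.mul_inv_rev, hinv, mul_comm]



/-- A double-sum closed form for the generalized Bernoulli polynomial `B_n^a(-x)`. -/
theorem genBernoulli_double_sum (n a : ℕ) (ha : 0 < a) (x : ℝ) :
    genBernoulliNeg a x n =
      ∑ r ∈ Finset.range (n + 1),
        ((n + 1).choose (r + 1) : ℝ) * (-1 : ℝ) ^ r *
          ∑ l ∈ Finset.range (n + 1),
            (stirling2 (l + a * r) (a * r) : ℝ) * ((r : ℝ) * x) ^ (n - l) *
              (n.choose l : ℝ) * ((l + a * r).choose (a * r) : ℝ)⁻¹ := by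
  have hFc : constantCoeff (R := ℝ) (expm1DivT ^ a * expSeries x) = 1 := by
    rw [map_mul, map_pow, constantCoeff_expm1DivT, constantCoeff_expSeries, one_pow, one_mul]
  rw [genBernoulliNeg, inv_rewrite, coeff_inv_sum _ hFc n, Finset.mul_sum]
  refine Finset.sum_congr rfl fun r hr => ?_
  have hrn : r ≤ n := Nat.lt_succ_iff.mp (Finset.mem_range.mp hr)
  have key : (n.factorial : ℝ) * coeff (R := ℝ) n ((expm1DivT ^ a * expSeries x) ^ r)
      = ∑ l ∈ Finset.range (n + 1),
          (stirling2 (l + a * r) (a * r) : ℝ) * ((r : ℝ) * x) ^ (n - l) *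
            (n.choose l : ℝ) * ((l + a * r).choose (a * r) : ℝ)⁻¹ := by
    rw [mul_pow, ← pow_mul, expSeries_pow, coeff_mul,
      Nat.sum_antidiagonal_eq_sum_range_succ_mk, Finset.mul_sum]
    refine Finset.sum_congr rfl fun l hl => ?_
    have hln : l ≤ n := Nat.lt_succ_iff.mp (Finset.mem_range.mp hl)
    rw [coeff_expm1DivT_pow, expSeries, coeff_mk]
    have h1 : ((n.choose l : ℕ) : ℝ) * (l.factorial : ℝ) * ((n - l).factorial : ℝ)
        = (n.factorial : ℝ) := by
      exact_mod_cast congrArg (Nat.cast : ℕ → ℝ) (Nat.choose_mul_factorial_mul_factorial hln)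
    have h2 : (((l + a * r).choose (a * r) : ℕ) : ℝ) * ((a * r).factorial : ℝ) *
        (l.factorial : ℝ) = ((l + a * r).factorial : ℝ) := by
      have h := Nat.choose_mul_factorial_mul_factorial (show a * r ≤ l + a * r by omega)
      rw [show l + a * r - a * r = l from by omega] at h
      exact_mod_cast congrArg (Nat.cast : ℕ → ℝ) h
    have hC : (((l + a * r).choose (a * r) : ℕ) : ℝ) ≠ 0 := by
      have := Nat.choose_pos (show a * r ≤ l + a * r by omega)
      positivity
    have hfl : (l.factorial : ℝ) ≠ 0 := by exact_mod_cast Nat.factorial_ne_zero _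
    have hfnl : ((n - l).factorial : ℝ) ≠ 0 := by exact_mod_cast Nat.factorial_ne_zero _
    have hfar : ((a * r).factorial : ℝ) ≠ 0 := by exact_mod_cast Nat.factorial_ne_zero _
    rw [← h1, ← h2]
    field_simp
  rw [← key]
  ring
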